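/- Cvijović–Miller reduction formula. Let α, β, a, c, d be complex with β and c not nonpositive integers. Then for every complex x with |x| < 1 and Re x < 1/2, Σ_{i=0}^{∞} Σ_{n=0}^{∞} ( (α)_{i+n} / (β)_{i+n} ) · (a)_i (β − d)_i (d)_n x^{i+n} / ( (c)_i i! n! ) = (1 − x)^{−α} · Σ_{n=0}^{∞} (α)_n (β − d)_n (c − a)_n (x/(x−1))^n / ( (β)_n (c)_n n! ), where (1 − x)^{−α} denotes the principal branch. -/

import Mathlib

/-- Pochhammer symbol `(a)ₖ = a(a+1)⋯(a+k−1)` for complex `a`. -/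
noncomputable def poch (a : ℂ) (k : ℕ) : ℂ := ∏ i ∈ Finset.range k, (a + i)


open Finset Complex Filter Topology Metric
open scoped Nat

lemma poch_zero (a : ℂ) : poch a 0 = 1 := by simp [poch]

lemma poch_succ (a : ℂ) (k : ℕ) : poch a (k+1) = poch a k * (a + k) := by
  simp [poch, Finset.prod_range_succ]

lemma poch_succ' (a : ℂ) (k : ℕ) : poch a (k+1) = a * poch (a+1) k := by
  simp only [poch]
  rw [Finset.prod_range_succ', mul_comm]
  congr 1
  · simp
  · exact Finset.prod_congr rfl fun i _ => by push_cast; ring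

lemma poch_add (a : ℂ) (m n : ℕ) : poch a (m+n) = poch a m * poch (a+m) n := by
  simp only [poch, Finset.prod_range_add]
  congr 1
  exact Finset.prod_congr rfl fun i _ => by push_cast; ring

lemma poch_one (n : ℕ) : poch 1 n = (n ! : ℂ) := by
  induction n with
  | zero => simp [poch]
  | succ n ih => rw [poch_succ, ih, Nat.factorial_succ]; push_cast; ring

lemma poch_ne_zero {a : ℂ} (ha : ∀ k : ℕ, a ≠ -(k : ℂ)) (n : ℕ) : poch a n ≠ 0 := by
  rw [poch, Finset.prod_ne_zero_iff]
  intro i _ h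
  exact ha i (by linear_combination h)

lemma pascal_sum (g : ℕ → ℂ) (m : ℕ) :
    ∑ n ∈ range (m+2), ((m+1).choose n : ℂ) * g n
      = ∑ n ∈ range (m+1), (m.choose n : ℂ) * g n
        + ∑ n ∈ range (m+1), (m.choose n : ℂ) * g (n+1) := by
  have key : ∀ i : ℕ, ((m+1).choose (i+1) : ℂ) = m.choose i + m.choose (i+1) := by
    intro i; rw [Nat.choose_succ_succ]; push_cast; ring
  rw [Finset.sum_range_succ' (fun n => ((m+1).choose n : ℂ) * g n) (m+1)]
  simp only [key, add_mul, Finset.sum_add_distrib, Nat.choose_zero_right, Nat.cast_one, one_mul]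
  have h2 : ∑ i ∈ range (m+1), (m.choose (i+1) : ℂ) * g (i+1) + g 0
      = ∑ n ∈ range (m+1), (m.choose n : ℂ) * g n := by
    rw [Finset.sum_range_succ (fun i => (m.choose (i+1) : ℂ) * g (i+1)) m]
    simp only [Nat.choose_succ_self, Nat.cast_zero, zero_mul, add_zero]
    conv_rhs => rw [Finset.sum_range_succ' (fun n => (m.choose n : ℂ) * g n) m]
    simp
  linear_combination h2

lemma ID0 : ∀ (m : ℕ) (x y : ℂ),
    poch (x+y) m = ∑ n ∈ range (m+1), (m.choose n : ℂ) * (poch x n * poch y (m-n)) := by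
  intro m
  induction m with
  | zero => intro x y; simp [poch]
  | succ m ih =>
    intro x y
    rw [show m+1+1 = m+2 from rfl,
      pascal_sum (fun n => poch x n * poch y (m+1-n)) m]
    have e1 : ∑ n ∈ range (m+1), (m.choose n : ℂ) * (poch x n * poch y (m+1-n))
        = y * ∑ n ∈ range (m+1), (m.choose n : ℂ) * (poch x n * poch (y+1) (m-n)) := by
      rw [Finset.mul_sum]
      apply Finset.sum_congr rfl
      intro n hn
      have hnm : n ≤ m := by simpa [Nat.lt_succ_iff] using hn
      rw [show m+1-n = (m-n)+1 by omega, poch_succ']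
      ring
    have e2 : ∑ n ∈ range (m+1), (m.choose n : ℂ) * (poch x (n+1) * poch y (m+1-(n+1)))
        = x * ∑ n ∈ range (m+1), (m.choose n : ℂ) * (poch (x+1) n * poch y (m-n)) := by
      rw [Finset.mul_sum]
      apply Finset.sum_congr rfl
      intro n hn
      rw [show m+1-(n+1) = m-n by omega, poch_succ']
      ring
    rw [e1, e2, ← ih x (y+1), ← ih (x+1) y, show x + (y+1) = (x+y)+1 by ring,
      show (x+1) + y = (x+y)+1 by ring, poch_succ']
    ring

lemma ID2 : ∀ (m : ℕ) (a c : ℂ),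
    poch a m = ∑ n ∈ range (m+1),
      (-1:ℂ)^n * (m.choose n : ℂ) * (poch (c-a) n * poch (c+n) (m-n)) := by
  intro m
  induction m with
  | zero => intro a c; simp [poch]
  | succ m ih =>
    intro a c
    have main : ∑ n ∈ range (m+2), ((m+1).choose n : ℂ) *
        ((-1:ℂ)^n * (poch (c-a) n * poch (c+n) (m+1-n)))
        = poch a (m+1) := by
      rw [pascal_sum (fun n => (-1:ℂ)^n * (poch (c-a) n * poch (c+(n:ℕ)) (m+1-n))) m]
      have e1 : ∑ n ∈ range (m+1), (m.choose n : ℂ) *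
          ((-1:ℂ)^n * (poch (c-a) n * poch (c+(n:ℕ)) (m+1-n)))
          = (c+m) * ∑ n ∈ range (m+1), (-1:ℂ)^n * (m.choose n : ℂ) *
              (poch (c-a) n * poch (c+n) (m-n)) := by
        rw [Finset.mul_sum]
        apply Finset.sum_congr rfl
        intro n hn
        have hnm : n ≤ m := by simpa [Nat.lt_succ_iff] using hn
        rw [show m+1-n = (m-n)+1 by omega, poch_succ]
        have hc : (c + (n:ℕ)) + ((m-n : ℕ) : ℂ) = c + m := by
          push_cast [Nat.cast_sub hnm]; ring
        rw [hc]; ring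
      have e2 : ∑ n ∈ range (m+1), (m.choose n : ℂ) *
          ((-1:ℂ)^(n+1) * (poch (c-a) (n+1) * poch (c+((n+1:ℕ):ℕ)) (m+1-(n+1))))
          = -(c-a) * ∑ n ∈ range (m+1), (-1:ℂ)^n * (m.choose n : ℂ) *
              (poch ((c+1)-a) n * poch ((c+1)+n) (m-n)) := by
        rw [Finset.mul_sum]
        apply Finset.sum_congr rfl
        intro n hn
        rw [show m+1-(n+1) = m-n by omega, poch_succ']
        have h1 : (c - a) + 1 = (c+1) - a := by ring
        have h2 : (c + (((n+1:ℕ):ℕ) : ℂ)) = (c+1) + (n:ℕ) := by push_cast; ring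
        rw [pow_succ, h1, h2]
        ring
      rw [e1, e2, ← ih a c, ← ih a (c+1), poch_succ]
      ring
    rw [← main]
    apply Finset.sum_congr rfl
    intro n _
    ring

lemma triangle (f : ℕ → ℕ → ℂ) (m : ℕ) :
    ∑ n ∈ range (m+1), ∑ k ∈ range (m+1-n), f n k
      = ∑ i ∈ range (m+1), ∑ n ∈ range (i+1), f n (i-n) := by
  rw [Finset.sum_sigma', Finset.sum_sigma']
  apply Finset.sum_nbij' (i := fun p => ⟨p.1 + p.2, p.1⟩) (j := fun q => ⟨q.2, q.1 - q.2⟩)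
  · rintro ⟨n, k⟩ h
    simp only [Finset.mem_sigma, Finset.mem_range] at h ⊢
    omega
  · rintro ⟨i, n⟩ h
    simp only [Finset.mem_sigma, Finset.mem_range] at h ⊢
    omega
  · rintro ⟨n, k⟩ h
    simp
  · rintro ⟨i, n⟩ h
    simp only [Finset.mem_sigma, Finset.mem_range] at h
    obtain ⟨h1, h2⟩ := h
    have hni : n ≤ i := by omega
    simp [Nat.add_sub_cancel' hni]
  · rintro ⟨n, k⟩ h
    simp

lemma fact_ne_zero' (k : ℕ) : ((k)! : ℂ) ≠ 0 := Nat.cast_ne_zero.2 (Nat.factorial_ne_zero k)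

lemma choose_trinom {n i m : ℕ} (hni : n ≤ i) (him : i ≤ m) :
    ((m.choose n : ℂ)) * ((m-n).choose (i-n) : ℂ) = (m.choose i : ℂ) * (i.choose n : ℂ) := by
  rw [Nat.cast_choose ℂ (le_trans hni him), Nat.cast_choose ℂ (show i-n ≤ m-n by omega),
    Nat.cast_choose ℂ him, Nat.cast_choose ℂ hni, show m-n-(i-n) = m-i by omega]
  have h := fact_ne_zero'
  rw [div_mul_div_comm, div_mul_div_comm,
    div_eq_div_iff (mul_ne_zero (mul_ne_zero (h _) (h _)) (mul_ne_zero (h _) (h _)))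
      (mul_ne_zero (mul_ne_zero (h _) (h _)) (mul_ne_zero (h _) (h _)))]
  ring

lemma cancel_three (u v A B C : ℂ) (hA : A ≠ 0) (hB : B ≠ 0) (hC : C ≠ 0) :
    u * A * B * C * A⁻¹ * B⁻¹ * C⁻¹ * v = u * v := by
  have h1 : u * A * B * C * A⁻¹ * B⁻¹ * C⁻¹ * v = u * (A*A⁻¹) * (B*B⁻¹) * (C*C⁻¹) * v := by ring
  rw [h1, mul_inv_cancel₀ hA, mul_inv_cancel₀ hB, mul_inv_cancel₀ hC, mul_one, mul_one, mul_one]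

lemma cancel_spot2 (p q r s t A B : ℂ) (hA : A ≠ 0) (hB : B ≠ 0) :
    p * A * q * r * s * B * A⁻¹ * B⁻¹ = p * q * r * s := by
  have h1 : p * A * q * r * s * B * A⁻¹ * B⁻¹ = p*q*r*s * (A*A⁻¹) * (B*B⁻¹) := by ring
  rw [h1, mul_inv_cancel₀ hA, mul_inv_cancel₀ hB, mul_one, mul_one]

lemma keycore (m : ℕ) (a β c d : ℂ) :
    ∑ n ∈ range (m+1), (-1:ℂ)^n * (m.choose n : ℂ) * poch (β-d) n * poch (c-a) n
          * poch (β+n) (m-n) * poch (c+n) (m-n)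
      = ∑ i ∈ range (m+1), (m.choose i : ℂ) * poch a i * poch (β-d) i
          * poch d (m-i) * poch (c+i) (m-i) := by
  calc
    ∑ n ∈ range (m+1), (-1:ℂ)^n * (m.choose n : ℂ) * poch (β-d) n * poch (c-a) n
          * poch (β+n) (m-n) * poch (c+n) (m-n)
        = ∑ n ∈ range (m+1), ∑ k ∈ range (m+1-n),
            (-1:ℂ)^n * (m.choose n : ℂ) * poch (β-d) n * poch (c-a) n *
              (((m-n).choose k : ℂ) * (poch ((β-d)+n) k * poch d (m-n-k))) *
                poch (c+n) (m-n) := by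
      apply Finset.sum_congr rfl
      intro n hn
      have hnm : n ≤ m := by simpa [Nat.lt_succ_iff] using hn
      have hβ : poch (β+(n:ℕ)) (m-n)
          = ∑ k ∈ range (m+1-n), ((m-n).choose k : ℂ) * (poch ((β-d)+n) k * poch d (m-n-k)) := by
        rw [show (β:ℂ)+(n:ℕ) = ((β-d)+(n:ℕ))+d by ring, ID0 (m-n), show m-n+1 = m+1-n by omega]
      rw [hβ, Finset.mul_sum, Finset.sum_mul]
    _ = ∑ i ∈ range (m+1), ∑ n ∈ range (i+1),
            (-1:ℂ)^n * (m.choose n : ℂ) * poch (β-d) n * poch (c-a) n *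
              (((m-n).choose (i-n) : ℂ) * (poch ((β-d)+n) (i-n) * poch d (m-n-(i-n)))) *
                poch (c+n) (m-n) :=
      triangle (fun n k => (-1:ℂ)^n * (m.choose n : ℂ) * poch (β-d) n * poch (c-a) n *
              (((m-n).choose k : ℂ) * (poch ((β-d)+n) k * poch d (m-n-k))) *
                poch (c+n) (m-n)) m
    _ = ∑ i ∈ range (m+1), (m.choose i : ℂ) * poch a i * poch (β-d) i
          * poch d (m-i) * poch (c+i) (m-i) := by
      apply Finset.sum_congr rfl
      intro i hi
      have him : i ≤ m := by simpa [Nat.lt_succ_iff] using hi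
      have inner : ∀ n ∈ range (i+1),
          (-1:ℂ)^n * (m.choose n : ℂ) * poch (β-d) n * poch (c-a) n *
              (((m-n).choose (i-n) : ℂ) * (poch ((β-d)+n) (i-n) * poch d (m-n-(i-n)))) *
                poch (c+n) (m-n)
          = ((m.choose i : ℂ) * poch (β-d) i * poch d (m-i) * poch (c+i) (m-i)) *
              ((-1:ℂ)^n * (i.choose n : ℂ) * (poch (c-a) n * poch (c+n) (i-n))) := by
        intro n hn
        have hni : n ≤ i := by simpa [Nat.lt_succ_iff] using hn
        have e1 : m-n-(i-n) = m-i := by omega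
        have e2 : poch (c+(n:ℕ)) (m-n) = poch (c+(n:ℕ)) (i-n) * poch (c+(i:ℕ)) (m-i) := by
          rw [show m-n = (i-n)+(m-i) by omega, poch_add]
          congr 2
          push_cast [Nat.cast_sub hni]
          ring
        have e3 : poch (β-d) n * poch ((β-d)+(n:ℕ)) (i-n) = poch (β-d) i := by
          rw [← poch_add, show n+(i-n) = i by omega]
        have e4 := choose_trinom hni him
        rw [e1, e2]
        linear_combination ((-1:ℂ)^n * (m.choose n : ℂ) * (((m-n).choose (i-n)) : ℂ) *
            poch (c-a) n * poch d (m-i) * poch (c+(n:ℕ)) (i-n) * poch (c+(i:ℕ)) (m-i)) * e3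
          + ((-1:ℂ)^n * poch (β-d) i * poch (c-a) n * poch d (m-i) * poch (c+(n:ℕ)) (i-n)
              * poch (c+(i:ℕ)) (m-i)) * e4
      rw [Finset.sum_congr rfl inner, ← Finset.mul_sum, ← ID2 i a c]
      ring

lemma key (α β a c d : ℂ) (hβ : ∀ k : ℕ, β ≠ -(k:ℂ)) (hc : ∀ k : ℕ, c ≠ -(k:ℂ)) (m : ℕ) :
    ∑ n ∈ range (m+1), poch α m * poch (β-d) n * poch (c-a) n * (-1:ℂ)^n
        / (poch β n * poch c n * (n ! : ℂ) * ((m-n)! : ℂ))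
      = poch α m / poch β m * ∑ i ∈ range (m+1),
          poch a i * poch (β-d) i * poch d (m-i) / (poch c i * (i ! : ℂ) * ((m-i)! : ℂ)) := by
  have hfac := fact_ne_zero'
  have hβm := poch_ne_zero hβ
  have hcm := poch_ne_zero hc
  have hK : ∀ n ≤ m, poch β m = poch β n * poch (β+(n:ℕ)) (m-n) := by
    intro n hn
    rw [← poch_add, Nat.add_sub_cancel' hn]
  have hKc : ∀ n ≤ m, poch c m = poch c n * poch (c+(n:ℕ)) (m-n) := by
    intro n hn
    rw [← poch_add, Nat.add_sub_cancel' hn]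
  have hF : ∀ n ≤ m, ((m ! : ℕ) : ℂ) = (m.choose n : ℂ) * (n ! : ℂ) * ((m-n)! : ℂ) := by
    intro n hn
    rw [← Nat.choose_mul_factorial_mul_factorial hn]
    push_cast
    ring
  calc
    ∑ n ∈ range (m+1), poch α m * poch (β-d) n * poch (c-a) n * (-1:ℂ)^n
        / (poch β n * poch c n * (n ! : ℂ) * ((m-n)! : ℂ))
        = ∑ n ∈ range (m+1), poch α m / (poch β m * poch c m * ((m)! : ℂ)) *
            ((-1:ℂ)^n * (m.choose n : ℂ) * poch (β-d) n * poch (c-a) n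
              * poch (β+n) (m-n) * poch (c+n) (m-n)) := by
      apply Finset.sum_congr rfl
      intro n hn
      have hnm : n ≤ m := by simpa [Nat.lt_succ_iff] using hn
      rw [hK n hnm, hKc n hnm, hF n hnm]
      have h1 : poch β n ≠ 0 := hβm n
      have h2 : poch c n ≠ 0 := hcm n
      have h3 : poch (β+(n:ℕ)) (m-n) ≠ 0 := by
        intro h
        exact hβm m (by rw [hK n hnm, h, mul_zero])
      have h4 : poch (c+(n:ℕ)) (m-n) ≠ 0 := by
        intro h
        exact hcm m (by rw [hKc n hnm, h, mul_zero])
      have h5 : (m.choose n : ℂ) ≠ 0 := Nat.cast_ne_zero.2 (Nat.choose_pos hnm).ne'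
      field_simp [h3, h4, h5]
    _ = poch α m / (poch β m * poch c m * ((m)! : ℂ)) *
          ∑ n ∈ range (m+1), ((-1:ℂ)^n * (m.choose n : ℂ) * poch (β-d) n * poch (c-a) n
              * poch (β+n) (m-n) * poch (c+n) (m-n)) := (Finset.mul_sum _ _ _).symm
    _ = poch α m / (poch β m * poch c m * ((m)! : ℂ)) *
          ∑ i ∈ range (m+1), ((m.choose i : ℂ) * poch a i * poch (β-d) i
              * poch d (m-i) * poch (c+i) (m-i)) := by rw [keycore m a β c d]
    _ = ∑ i ∈ range (m+1), poch α m / (poch β m * poch c m * ((m)! : ℂ)) *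
          ((m.choose i : ℂ) * poch a i * poch (β-d) i * poch d (m-i) * poch (c+i) (m-i)) :=
      Finset.mul_sum _ _ _
    _ = poch α m / poch β m * ∑ i ∈ range (m+1),
          poch a i * poch (β-d) i * poch d (m-i) / (poch c i * (i ! : ℂ) * ((m-i)! : ℂ)) := by
      rw [Finset.mul_sum]
      apply Finset.sum_congr rfl
      intro i hi
      have him : i ≤ m := by simpa [Nat.lt_succ_iff] using hi
      rw [hKc i him, hF i him]
      have h2 : poch c i ≠ 0 := hcm i
      have h4 : poch (c+(i:ℕ)) (m-i) ≠ 0 := by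
        intro h
        exact hcm m (by rw [hKc i him, h, mul_zero])
      have h5 : (m.choose i : ℂ) ≠ 0 := Nat.cast_ne_zero.2 (Nat.choose_pos him).ne'
      have h6 : poch β m ≠ 0 := hβm m
      field_simp [h4, h5]

section Dominated

def Dominated (f : ℕ → ℂ) (L : ℝ) : Prop :=
  ∀ r : ℝ, L < r → ∃ C : ℝ, 0 < C ∧ ∀ m, ‖f m‖ ≤ C * r ^ m

lemma Dominated.mono {f : ℕ → ℂ} {L L' : ℝ} (h : Dominated f L) (hL : L ≤ L') :
    Dominated f L' := fun r hr => h r (lt_of_le_of_lt hL hr)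

lemma Dominated.of_norm_eq {f g : ℕ → ℂ} {L : ℝ} (h : Dominated f L)
    (hg : ∀ n, ‖g n‖ = ‖f n‖) : Dominated g L := by
  intro r hr
  obtain ⟨C, hC0, hC⟩ := h r hr
  exact ⟨C, hC0, fun m => (hg m) ▸ hC m⟩

lemma dominated_of_eventually_ratio {f : ℕ → ℂ} {L : ℝ} (hL : 0 ≤ L)
    (h : ∀ r, L < r → ∀ᶠ m in atTop, ‖f (m+1)‖ ≤ r * ‖f m‖) : Dominated f L := by
  intro r hr
  have hr0 : 0 < r := lt_of_le_of_lt hL hr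
  obtain ⟨N, hN⟩ := eventually_atTop.mp (h r hr)
  have hne : (Finset.range (N+1)).Nonempty := ⟨0, by simp⟩
  set S : ℝ := (Finset.range (N+1)).sup' hne (fun n => ‖f n‖ / r^n) with hS
  have hS0 : 0 ≤ S := le_trans (div_nonneg (norm_nonneg (f 0)) (by positivity))
    (Finset.le_sup' (fun n => ‖f n‖ / r^n) (by simp : 0 ∈ Finset.range (N+1)))
  refine ⟨S + 1, by linarith, fun m => ?_⟩
  have hbase : ∀ n ≤ N, ‖f n‖ ≤ (S+1) * r^n := by
    intro n hn
    have h1 : ‖f n‖ / r^n ≤ S :=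
      Finset.le_sup' (fun n => ‖f n‖ / r^n) (by simp [Nat.lt_succ_iff, hn])
    have h2 : 0 < r^n := by positivity
    calc ‖f n‖ = (‖f n‖ / r^n) * r^n := by field_simp
      _ ≤ S * r^n := mul_le_mul_of_nonneg_right h1 h2.le
      _ ≤ (S+1) * r^n := by nlinarith
  rcases le_or_gt m N with hm | hm
  · exact hbase m hm
  · have : ∀ k, ‖f (N + k)‖ ≤ (S+1) * r^(N+k) := by
      intro k
      induction k with
      | zero => exact hbase N le_rfl
      | succ k ih =>
        have h1 : ‖f (N+k+1)‖ ≤ r * ‖f (N+k)‖ := hN (N+k) (Nat.le_add_right _ _)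
        calc ‖f (N+(k+1))‖ = ‖f (N+k+1)‖ := by ring_nf
          _ ≤ r * ‖f (N+k)‖ := h1
          _ ≤ r * ((S+1) * r^(N+k)) := mul_le_mul_of_nonneg_left ih hr0.le
          _ = (S+1) * r^(N+(k+1)) := by ring
    have hm' : m = N + (m - N) := by omega
    rw [hm']
    exact this (m - N)

lemma tendsto_ratio_aux (u : ℂ) :
    Tendsto (fun m : ℕ => ‖u + m‖ / ((m:ℝ)+1)) atTop (𝓝 1) := by
  have h0 : Tendsto (fun m : ℕ => ((m:ℝ)+1)⁻¹) atTop (𝓝 0) := by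
    apply tendsto_inv_atTop_zero.comp
    exact tendsto_atTop_add_const_right atTop 1 tendsto_natCast_atTop_atTop
  have h1 : Tendsto (fun m : ℕ => ((u - 1) * ((m:ℂ)+1)⁻¹)) atTop (𝓝 0) := by
    rw [tendsto_zero_iff_norm_tendsto_zero]
    have : ∀ m : ℕ, ‖(u - 1) * ((m:ℂ)+1)⁻¹‖ = ‖u-1‖ * ((m:ℝ)+1)⁻¹ := by
      intro m
      rw [norm_mul, norm_inv]
      congr 2
      rw [show ((m:ℂ)+1) = ((m+1 : ℕ) : ℂ) by push_cast; ring, Complex.norm_natCast]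
      push_cast; ring
    simp only [this]
    simpa using h0.const_mul ‖u-1‖
  have h2 : Tendsto (fun m : ℕ => (u + m) / ((m:ℂ)+1)) atTop (𝓝 1) := by
    have : ∀ m : ℕ, (u + m) / ((m:ℂ)+1) = 1 + (u - 1) * ((m:ℂ)+1)⁻¹ := by
      intro m
      have hm : ((m:ℂ)+1) ≠ 0 := by
        rw [show ((m:ℂ)+1) = ((m+1 : ℕ) : ℂ) by push_cast; ring]
        exact Nat.cast_ne_zero.mpr (Nat.succ_ne_zero m)
      field_simp
      ring
    simp only [this]
    simpa using (tendsto_const_nhds (x := (1:ℂ))).add h1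
  have h3 := h2.norm
  simp only [norm_div, norm_one] at h3
  have hnrm : ∀ m : ℕ, ‖(m:ℂ)+1‖ = ((m:ℝ)+1) := by
    intro m
    rw [show ((m:ℂ)+1) = ((m+1 : ℕ) : ℂ) by push_cast; ring, Complex.norm_natCast]
    push_cast; ring
  simp only [hnrm] at h3
  exact h3

lemma ratio1 (u v : ℂ) {r : ℝ} (hr : 1 < r) :
    ∀ᶠ m : ℕ in atTop, ‖u + m‖ ≤ r * ‖v + m‖ := by
  have h1 := tendsto_ratio_aux u
  have h2 : Tendsto (fun m : ℕ => r * (‖v + m‖/((m:ℝ)+1))) atTop (𝓝 (r * 1)) :=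
    (tendsto_ratio_aux v).const_mul r
  have h3 := h1.eventually_lt h2 (by simpa using hr)
  filter_upwards [h3] with m hm
  have hm1 : (0:ℝ) < (m:ℝ)+1 := by positivity
  have := mul_le_mul_of_nonneg_right hm.le hm1.le
  calc ‖u + (m:ℂ)‖ = (‖u + m‖/((m:ℝ)+1)) * ((m:ℝ)+1) := by field_simp
    _ ≤ (r * (‖v + m‖/((m:ℝ)+1))) * ((m:ℝ)+1) := this
    _ = r * ‖v + (m:ℂ)‖ := by field_simp

end Dominated

lemma dominated_poch_div (u v : ℂ) (hv : ∀ k : ℕ, v ≠ -(k:ℂ)) :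
    Dominated (fun m => poch u m / poch v m) 1 := by
  apply dominated_of_eventually_ratio zero_le_one
  intro r hr
  filter_upwards [ratio1 u v hr] with m hm
  have hv1 : v + (m:ℂ) ≠ 0 := by
    have := poch_ne_zero hv (m+1)
    rw [poch_succ] at this
    exact right_ne_zero_of_mul this
  have heq : poch u (m+1) / poch v (m+1) = (poch u m / poch v m) * ((u+m)/(v+m)) := by
    rw [poch_succ, poch_succ, mul_div_mul_comm]
  rw [heq, norm_mul]
  have hpos : 0 < ‖v+(m:ℂ)‖ := norm_pos_iff.mpr hv1
  have hq : ‖(u+(m:ℂ))/(v+(m:ℂ))‖ ≤ r := by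
    rw [norm_div]
    exact (div_le_iff₀ hpos).mpr hm
  calc ‖poch u m / poch v m‖ * ‖(u+(m:ℂ))/(v+(m:ℂ))‖
      ≤ ‖poch u m / poch v m‖ * r := mul_le_mul_of_nonneg_left hq (norm_nonneg _)
    _ = r * ‖poch u m / poch v m‖ := mul_comm _ _

lemma dominated_pow (x : ℂ) : Dominated (fun m => x^m) ‖x‖ := by
  intro r hr
  exact ⟨1, one_pos, fun m => by
    rw [one_mul, norm_pow]
    exact pow_le_pow_left₀ (norm_nonneg x) hr.le m⟩

lemma Dominated.mul {f g : ℕ → ℂ} {Lf Lg : ℝ} (hf : Dominated f Lf) (hg : Dominated g Lg)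
    (hLf : 0 ≤ Lf) (hLg : 0 ≤ Lg) : Dominated (fun m => f m * g m) (Lf * Lg) := by
  intro r hr
  obtain ⟨δ, hδ0, hδ1, hδ2⟩ : ∃ δ : ℝ, 0 < δ ∧ δ ≤ 1 ∧ δ ≤ (r - Lf*Lg)/(Lf+Lg+1) := by
    refine ⟨min 1 ((r - Lf*Lg)/(Lf+Lg+1)), ?_, min_le_left _ _, min_le_right _ _⟩
    exact lt_min one_pos (div_pos (by linarith) (by linarith))
  obtain ⟨Cf, hCf0, hCf⟩ := hf (Lf+δ) (by linarith)
  obtain ⟨Cg, hCg0, hCg⟩ := hg (Lg+δ) (by linarith)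
  have hkey : (Lf+δ)*(Lg+δ) ≤ r := by
    have h3 : δ*(Lf+Lg+1) ≤ r - Lf*Lg := by
      rw [← le_div_iff₀ (by linarith : (0:ℝ) < Lf+Lg+1)]
      exact hδ2
    nlinarith [hδ0.le, hδ1]
  refine ⟨Cf*Cg, mul_pos hCf0 hCg0, fun m => ?_⟩
  calc ‖f m * g m‖ = ‖f m‖*‖g m‖ := norm_mul _ _
    _ ≤ (Cf*(Lf+δ)^m) * (Cg*(Lg+δ)^m) :=
        mul_le_mul (hCf m) (hCg m) (norm_nonneg _) (by positivity)
    _ = Cf*Cg * ((Lf+δ)*(Lg+δ))^m := by rw [mul_pow]; ring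
    _ ≤ Cf*Cg * r^m := by
        apply mul_le_mul_of_nonneg_left _ (by positivity)
        exact pow_le_pow_left₀ (by positivity) hkey m

lemma dominated_one : Dominated (fun _ : ℕ => (1:ℂ)) 1 := by
  intro r hr
  refine ⟨1, one_pos, fun m => ?_⟩
  rw [one_mul, norm_one]
  calc (1:ℝ) = 1^m := (one_pow m).symm
    _ ≤ r^m := pow_le_pow_left₀ zero_le_one hr.le m

lemma summable_dom_mul_pow {u : ℕ → ℂ} (hu : Dominated u 1) {t : ℝ} (ht0 : 0 ≤ t) (ht : t < 1) :
    Summable (fun i => ‖u i‖ * t^i) := by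
  obtain ⟨s, hs1, hst⟩ : ∃ s : ℝ, 1 < s ∧ s * t < 1 := by
    refine ⟨2/(1+t), ?_, ?_⟩
    · rw [lt_div_iff₀ (show (0:ℝ) < 1+t by linarith)]
      linarith
    · rw [div_mul_eq_mul_div, div_lt_one (show (0:ℝ) < 1+t by linarith)]
      linarith
  obtain ⟨C, hC0, hC⟩ := hu s hs1
  refine Summable.of_nonneg_of_le (fun i => by positivity) (fun i => ?_)
    ((summable_geometric_of_lt_one (by positivity) hst).mul_left C)
  calc ‖u i‖ * t^i ≤ (C * s^i) * t^i := mul_le_mul_of_nonneg_right (hC i) (by positivity)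
    _ = C * (s*t)^i := by rw [mul_pow]; ring

lemma choose_le_two_pow_real (m i : ℕ) : ((m.choose i : ℕ) : ℝ) ≤ 2^m := by
  rcases le_or_gt i m with h | h
  · have h1 : m.choose i ≤ ∑ j ∈ range (m+1), m.choose j :=
      Finset.single_le_sum (fun j _ => Nat.zero_le _) (by simp [Nat.lt_succ_iff, h])
    rw [Nat.sum_range_choose] at h1
    calc ((m.choose i : ℕ) : ℝ) ≤ ((2^m : ℕ) : ℝ) := by exact_mod_cast h1
      _ = 2^m := by push_cast; ring
  · rw [Nat.choose_eq_zero_of_lt h]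
    push_cast
    positivity

lemma summable_norm_W {g u v : ℕ → ℂ} {Lg : ℝ} (hLg : 0 ≤ Lg) (hg : Dominated g Lg)
    (hu : Dominated u 1) (hv : Dominated v 1) (hL : Lg < 1) :
    Summable (fun p : ℕ×ℕ => ‖g (p.1+p.2) * u p.1 * v p.2‖) := by
  obtain ⟨r, hr0, hgr, hr1⟩ : ∃ r : ℝ, 0 < r ∧ Lg < r ∧ r < 1 :=
    ⟨(Lg+1)/2, by linarith, by linarith, by linarith⟩
  obtain ⟨s, hs1, hrs⟩ : ∃ s : ℝ, 1 < s ∧ r * s < 1 := by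
    refine ⟨(1+r⁻¹)/2, ?_, ?_⟩
    · have : 1 < r⁻¹ := (one_lt_inv₀ hr0).mpr hr1
      linarith
    · have h1 : r * ((1+r⁻¹)/2) = (r + 1)/2 := by
        field_simp
      rw [h1]; linarith
  obtain ⟨Cg, hCg0, hCg⟩ := hg r hgr
  obtain ⟨Cu, hCu0, hCu⟩ := hu s hs1
  obtain ⟨Cv, hCv0, hCv⟩ := hv s hs1
  have hgeo : Summable (fun p : ℕ×ℕ => (Cg*Cu*Cv) * ((r*s)^p.1 * (r*s)^p.2)) := by
    apply Summable.mul_left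
    exact (summable_geometric_of_lt_one (by positivity) hrs).mul_of_nonneg
      (summable_geometric_of_lt_one (by positivity) hrs)
      (fun i => by positivity) (fun n => by positivity)
  apply Summable.of_nonneg_of_le (fun p => norm_nonneg _) _ hgeo
  rintro ⟨i, n⟩
  calc ‖g (i+n) * u i * v n‖ = ‖g (i+n)‖ * ‖u i‖ * ‖v n‖ := by rw [norm_mul, norm_mul]
    _ ≤ (Cg * r^(i+n)) * (Cu * s^i) * (Cv * s^n) := by
        apply mul_le_mul (mul_le_mul (hCg _) (hCu i) (norm_nonneg _) (by positivity))
          (hCv n) (norm_nonneg _) (by positivity)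
    _ = (Cg*Cu*Cv) * ((r*s)^i * (r*s)^n) := by ring

lemma summable_norm_Wb {g u v : ℕ → ℂ} {Lg : ℝ} (hLg : 0 ≤ Lg) (hg : Dominated g Lg)
    (hu : Dominated u 1) (hv : Dominated v 1) (hL : 2*Lg < 1) :
    Summable (fun p : ℕ×ℕ =>
      ‖g (p.1+p.2) * (((p.1+p.2).choose p.1 : ℕ) : ℂ) * u p.1 * v p.2‖) := by
  obtain ⟨r, hr0, hgr, hr2⟩ : ∃ r : ℝ, 0 < r ∧ Lg < r ∧ 2*r < 1 :=
    ⟨(2*Lg+1)/4, by linarith, by linarith, by linarith⟩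
  have h2r0 : 0 < 2*r := by linarith
  obtain ⟨s, hs1, hrs⟩ : ∃ s : ℝ, 1 < s ∧ (2*r) * s < 1 := by
    refine ⟨(1+(2*r)⁻¹)/2, ?_, ?_⟩
    · have : 1 < (2*r)⁻¹ := (one_lt_inv₀ h2r0).mpr hr2
      linarith
    · have h1 : (2*r) * ((1+(2*r)⁻¹)/2) = (2*r + 1)/2 := by
        field_simp
      rw [h1]; linarith
  obtain ⟨Cg, hCg0, hCg⟩ := hg r hgr
  obtain ⟨Cu, hCu0, hCu⟩ := hu s hs1
  obtain ⟨Cv, hCv0, hCv⟩ := hv s hs1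
  have hgeo : Summable (fun p : ℕ×ℕ => (Cg*Cu*Cv) * ((2*r*s)^p.1 * (2*r*s)^p.2)) := by
    apply Summable.mul_left
    exact (summable_geometric_of_lt_one (by positivity) hrs).mul_of_nonneg
      (summable_geometric_of_lt_one (by positivity) hrs)
      (fun i => by positivity) (fun n => by positivity)
  apply Summable.of_nonneg_of_le (fun p => norm_nonneg _) _ hgeo
  rintro ⟨i, n⟩
  have hch : ‖((((i+n).choose i : ℕ)) : ℂ)‖ ≤ 2^(i+n) := by
    rw [Complex.norm_natCast]
    exact choose_le_two_pow_real (i+n) i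
  calc ‖g (i+n) * (((i+n).choose i : ℕ) : ℂ) * u i * v n‖
      = ‖g (i+n)‖ * ‖(((i+n).choose i : ℕ) : ℂ)‖ * ‖u i‖ * ‖v n‖ := by
        rw [norm_mul, norm_mul, norm_mul]
    _ ≤ (Cg * r^(i+n)) * 2^(i+n) * (Cu * s^i) * (Cv * s^n) := by
        apply mul_le_mul _ (hCv n) (norm_nonneg _) (by positivity)
        apply mul_le_mul _ (hCu i) (norm_nonneg _) (by positivity)
        exact mul_le_mul (hCg _) hch (norm_nonneg _) (by positivity)
    _ = (Cg*Cu*Cv) * ((2*r*s)^i * (2*r*s)^n) := by ring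

lemma tsum_double_eq {W : ℕ×ℕ → ℂ} (hW : Summable fun p => ‖W p‖) :
    (∑' i : ℕ, ∑' n : ℕ, W (i,n)) = ∑' m : ℕ, ∑ kl ∈ Finset.HasAntidiagonal.antidiagonal m, W kl := by
  have hS : Summable W := hW.of_norm
  have hinner : ∀ b : ℕ, Summable (fun n => W (b, n)) := by
    intro b
    have hinj : Function.Injective (fun n : ℕ => (b, n)) := by
      intro x y h
      simpa using h
    exact ((hW.comp_injective hinj).of_norm)
  have hsig : Summable (fun x : Σ n : ℕ, Finset.HasAntidiagonal.antidiagonal n =>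
      W (Finset.HasAntidiagonal.sigmaAntidiagonalEquivProd x)) :=
    Finset.HasAntidiagonal.sigmaAntidiagonalEquivProd.summable_iff.mpr hS
  calc (∑' i : ℕ, ∑' n : ℕ, W (i,n)) = ∑' p : ℕ×ℕ, W p := (Summable.tsum_prod' hS hinner).symm
    _ = ∑' x : Σ n : ℕ, Finset.HasAntidiagonal.antidiagonal n, W (Finset.HasAntidiagonal.sigmaAntidiagonalEquivProd x) :=
        (Finset.HasAntidiagonal.sigmaAntidiagonalEquivProd.tsum_eq W).symm
    _ = ∑' m : ℕ, ∑' kl : Finset.HasAntidiagonal.antidiagonal m, W (kl : ℕ×ℕ) :=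
        Summable.tsum_sigma' (fun m => (hasSum_fintype _).summable) hsig
    _ = ∑' m : ℕ, ∑ kl ∈ Finset.HasAntidiagonal.antidiagonal m, W kl := by
        apply tsum_congr
        intro m
        rw [tsum_fintype]
        exact Finset.sum_coe_sort (Finset.HasAntidiagonal.antidiagonal m) W

lemma summable_antidiagonal_norm {W : ℕ×ℕ → ℂ} (hW : Summable fun p => ‖W p‖) :
    Summable (fun m : ℕ => ∑ kl ∈ Finset.HasAntidiagonal.antidiagonal m, ‖W kl‖) := by
  have h1 : Summable (fun x : Σ n : ℕ, Finset.HasAntidiagonal.antidiagonal n => ‖W (x.2 : ℕ×ℕ)‖) :=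
    Finset.HasAntidiagonal.sigmaAntidiagonalEquivProd.summable_iff.mpr hW
  have h2 := h1.sigma' (fun n => (hasSum_fintype _).summable)
  apply h2.congr
  intro m
  rw [tsum_fintype]
  exact Finset.sum_coe_sort (Finset.HasAntidiagonal.antidiagonal m) (fun kl => ‖W kl‖)

lemma summable_norm_pow {f : ℕ → ℂ} (hf : Dominated f 1) {z : ℂ} (hz : ‖z‖ < 1) :
    Summable (fun m => ‖f m * z^m‖) := by
  apply (summable_dom_mul_pow hf (norm_nonneg z) hz).congr
  intro m
  rw [norm_mul, norm_pow]

lemma summable_pow' {f : ℕ → ℂ} (hf : Dominated f 1) {z : ℂ} (hz : ‖z‖ < 1) :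
    Summable (fun m => f m * z^m) := (summable_norm_pow hf hz).of_norm

lemma summable_deriv_bound {f : ℕ → ℂ} (hf : Dominated f 1) {r : ℝ} (hr0 : 0 ≤ r) (hr : r < 1) :
    Summable (fun m : ℕ => ‖f m‖ * (m * r^(m-1))) := by
  obtain ⟨t, ht0, hrt, ht1⟩ : ∃ t : ℝ, 0 < t ∧ r ≤ t ∧ t < 1 :=
    ⟨(r+1)/2, by linarith, by linarith, by linarith⟩
  obtain ⟨s, hs1, hst⟩ : ∃ s : ℝ, 1 < s ∧ s * t < 1 := by
    refine ⟨2/(1+t), ?_, ?_⟩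
    · rw [lt_div_iff₀ (show (0:ℝ) < 1+t by linarith)]
      linarith
    · rw [div_mul_eq_mul_div, div_lt_one (show (0:ℝ) < 1+t by linarith)]
      linarith
  obtain ⟨C, hC0, hC⟩ := hf s hs1
  have hgeo : Summable (fun m : ℕ => (C/t) * ((m:ℝ)^1 * (s*t)^m)) := by
    apply Summable.mul_left
    apply summable_pow_mul_geometric_of_norm_lt_one
    rw [Real.norm_eq_abs, abs_of_pos (by positivity)]
    exact hst
  refine Summable.of_nonneg_of_le (fun m => by positivity) (fun m => ?_) hgeo
  have haux : t^(m-1) ≤ t^m / t := by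
    cases m with
    | zero =>
      simp only [Nat.zero_sub, pow_zero]
      rw [le_div_iff₀ ht0]
      linarith
    | succ m =>
      simp only [Nat.add_sub_cancel, pow_succ]
      rw [mul_div_assoc, div_self ht0.ne', mul_one]
  calc ‖f m‖ * (m * r^(m-1))
      ≤ (C * s^m) * (m * t^(m-1)) := by
        apply mul_le_mul (hC m) _ (by positivity) (by positivity)
        exact mul_le_mul_of_nonneg_left (pow_le_pow_left₀ hr0 hrt _) (Nat.cast_nonneg m)
    _ ≤ (C * s^m) * (m * (t^m / t)) := by
        apply mul_le_mul_of_nonneg_left _ (by positivity)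
        exact mul_le_mul_of_nonneg_left haux (Nat.cast_nonneg m)
    _ = (C/t) * ((m:ℝ)^1 * (s*t)^m) := by
        rw [div_eq_mul_inv, div_eq_mul_inv]
        ring

lemma hasDerivAt_powser {f : ℕ → ℂ} (hf : Dominated f 1) {z : ℂ} (hz : ‖z‖ < 1) :
    HasDerivAt (fun w => ∑' m, f m * w^m) (∑' m, f m * (m * z^(m-1))) z := by
  obtain ⟨r, hzr, hr1⟩ : ∃ r : ℝ, ‖z‖ < r ∧ r < 1 := ⟨(‖z‖+1)/2, by linarith, by linarith⟩
  have hr0 : (0:ℝ) < r := lt_of_le_of_lt (norm_nonneg z) hzr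
  apply hasDerivAt_tsum_of_isPreconnected (u := fun m => ‖f m‖ * (m * r^(m-1)))
    (summable_deriv_bound hf hr0.le hr1) Metric.isOpen_ball
    (convex_ball (0:ℂ) r).isPreconnected
    (g := fun m w => f m * w^m) (g' := fun m w => f m * (m * w^(m-1)))
    (fun m w _ => (hasDerivAt_pow m w).const_mul (f m))
    (fun m w hw => ?_) (Metric.mem_ball_self hr0) ?_ (mem_ball_zero_iff.mpr hzr)
  case _ =>
    exact summable_pow' hf (by simp : ‖(0:ℂ)‖ < 1)
  case _ =>
    rw [norm_mul]
    apply mul_le_mul_of_nonneg_left _ (norm_nonneg _)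
    rw [norm_mul, norm_pow, Complex.norm_natCast]
    apply mul_le_mul_of_nonneg_left _ (Nat.cast_nonneg m)
    exact pow_le_pow_left₀ (norm_nonneg w) (le_of_lt (mem_ball_zero_iff.mp hw)) _

lemma analyticOnNhd_powser {f : ℕ → ℂ} (hf : Dominated f 1) :
    AnalyticOnNhd ℂ (fun z => ∑' m, f m * z^m) (Metric.ball (0:ℂ) 1) := by
  apply DifferentiableOn.analyticOnNhd _ Metric.isOpen_ball
  intro z hz
  exact ((hasDerivAt_powser hf (mem_ball_zero_iff.mp hz)).differentiableAt).differentiableWithinAt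

lemma one_ne_negNat (k : ℕ) : (1:ℂ) ≠ -(k:ℂ) := by
  intro h
  have := congrArg Complex.re h
  simp only [Complex.one_re, Complex.neg_re, Complex.natCast_re] at this
  have hk : (0:ℝ) ≤ (k:ℝ) := Nat.cast_nonneg k
  linarith

lemma dominated_binom (s : ℂ) : Dominated (fun k => poch s k / (k ! : ℂ)) 1 := by
  apply (dominated_poch_div s 1 one_ne_negNat).of_norm_eq
  intro n
  rw [poch_one]

lemma binomial_hasSum (s : ℂ) {z : ℂ} (hz : ‖z‖ < 1) :
    HasSum (fun k : ℕ => poch s k / (k ! : ℂ) * z^k) ((1-z) ^ (-s)) := by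
  set c : ℕ → ℂ := fun k => poch s k / (k ! : ℂ) with hc
  have hdom : Dominated c 1 := dominated_binom s
  set F : ℂ → ℂ := fun w => ∑' k, c k * w^k with hF
  have hrec : ∀ k : ℕ, ((k:ℂ)+1) * c (k+1) = (s+k) * c k := by
    intro k
    rw [hc]
    simp only
    rw [poch_succ, Nat.factorial_succ]
    have h1 : ((k:ℂ)+1) ≠ 0 := by
      rw [show ((k:ℂ)+1) = ((k+1 : ℕ) : ℂ) by push_cast; ring]
      exact Nat.cast_ne_zero.mpr (Nat.succ_ne_zero k)
    have h2 : (k ! : ℂ) ≠ 0 := fact_ne_zero' k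
    have h3 : (((k+1) * k ! : ℕ) : ℂ) = ((k:ℂ)+1) * (k ! : ℂ) := by push_cast; ring
    rw [h3]
    field_simp
  have hsummder : ∀ w : ℂ, ‖w‖ < 1 → Summable (fun k => c k * ((k:ℂ) * w^(k-1))) := by
    intro w hw
    apply Summable.of_norm
    apply (summable_deriv_bound hdom (norm_nonneg w) hw).congr
    intro k
    rw [norm_mul, norm_mul, norm_pow, Complex.norm_natCast]
  have hfun : ∀ w : ℂ, ‖w‖ < 1 →
      (1-w) * (∑' k, c k * ((k:ℂ) * w^(k-1))) = s * F w := by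
    intro w hw
    have hs1 := hsummder w hw
    have hshift : (∑' k, c k * ((k:ℂ) * w^(k-1)))
        = ∑' k, c (k+1) * (((k:ℂ)+1) * w^k) := by
      rw [Summable.tsum_eq_zero_add hs1]
      simp only [Nat.cast_zero, zero_mul, mul_zero, zero_add]
      apply tsum_congr
      intro k
      rw [Nat.add_sub_cancel]
      push_cast
      ring
    have hs2 : Summable (fun k => c (k+1) * (((k:ℂ)+1) * w^k)) := by
      have h := (summable_nat_add_iff 1).mpr hs1
      apply h.congr
      intro k
      rw [Nat.add_sub_cancel]
      push_cast
      ring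
    have hs3 : Summable (fun k => c k * ((k:ℂ) * w^k)) := by
      apply (hs1.mul_left w).congr
      intro k
      cases k with
      | zero => simp
      | succ k =>
        rw [Nat.add_sub_cancel]
        push_cast
        rw [pow_succ]
        ring
    have hzF : w * (∑' k, c k * ((k:ℂ) * w^(k-1))) = ∑' k, c k * ((k:ℂ) * w^k) := by
      rw [← tsum_mul_left]
      apply tsum_congr
      intro k
      cases k with
      | zero => simp
      | succ k =>
        rw [Nat.add_sub_cancel]
        push_cast
        rw [pow_succ]
        ring
    calc (1-w) * (∑' k, c k * ((k:ℂ) * w^(k-1)))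
        = (∑' k, c k * ((k:ℂ) * w^(k-1))) - w * (∑' k, c k * ((k:ℂ) * w^(k-1))) := by ring
      _ = (∑' k, c (k+1) * (((k:ℂ)+1) * w^k)) - ∑' k, c k * ((k:ℂ) * w^k) := by
          rw [hzF, hshift]
      _ = ∑' k, (c (k+1) * (((k:ℂ)+1) * w^k) - c k * ((k:ℂ) * w^k)) := (Summable.tsum_sub hs2 hs3).symm
      _ = ∑' k, s * (c k * w^k) := by
          apply tsum_congr
          intro k
          linear_combination (w^k) * hrec k
      _ = s * F w := tsum_mul_left
  have hball : ∀ w ∈ Metric.ball (0:ℂ) 1, HasDerivAt (fun y => (1-y)^s * F y) 0 w := by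
    intro w hw
    rw [mem_ball_zero_iff] at hw
    have hw1 : (1-w) ≠ 0 := by
      intro h
      rw [sub_eq_zero] at h
      rw [← h] at hw
      simp at hw
    have hwre : w.re < 1 := by
      calc w.re ≤ |w.re| := le_abs_self _
        _ ≤ ‖w‖ := Complex.abs_re_le_norm w
        _ < 1 := hw
    have hslit : (1-w) ∈ Complex.slitPlane := by
      left
      simp only [Complex.sub_re, Complex.one_re]
      linarith
    have h1 : HasDerivAt (fun y : ℂ => (1-y)^s) (s * (1-w)^(s-1) * (-1)) w :=
      ((hasDerivAt_id w).const_sub 1).cpow_const hslit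
    have h2 := hasDerivAt_powser hdom hw
    have h3 := h1.mul h2
    have hpow : (1-w)^s = (1-w)^(s-1) * (1-w) := by
      conv_lhs => rw [show s = (s-1)+1 by ring]
      rw [Complex.cpow_add _ _ hw1, Complex.cpow_one]
    have h4 := hfun w hw
    refine h3.congr_deriv ?_
    rw [hpow]
    linear_combination ((1-w)^(s-1)) * h4
  have hconst : (1-z)^s * F z = 1 := by
    have hdiff : DifferentiableOn ℂ (fun y => (1-y)^s * F y) (Metric.ball (0:ℂ) 1) :=
      fun y hy => ((hball y hy).differentiableAt).differentiableWithinAt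
    have hfd : ∀ x ∈ Metric.ball (0:ℂ) 1,
        fderivWithin ℂ (fun y => (1-y)^s * F y) (Metric.ball (0:ℂ) 1) x = 0 := by
      intro x hx
      have hG := (hball x hx).hasFDerivAt
      rw [fderivWithin_of_mem_nhds (Metric.isOpen_ball.mem_nhds hx)]
      have := hG.fderiv
      rw [this]
      ext y
      simp
    have heq := (convex_ball (0:ℂ) 1).is_const_of_fderivWithin_eq_zero hdiff hfd
      (mem_ball_zero_iff.mpr hz) (Metric.mem_ball_self one_pos)
    rw [heq]
    have hF0 : F 0 = 1 := by
      rw [hF]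
      simp only
      rw [tsum_eq_single 0 (fun k hk => by rw [zero_pow hk, mul_zero])]
      simp [hc, poch]
    rw [hF0, sub_zero, Complex.one_cpow, mul_one]
  have hzne : (1-z) ≠ 0 := by
    intro h
    rw [sub_eq_zero] at h
    rw [← h] at hz
    simp at hz
  have hcne : (1-z)^s ≠ 0 := by
    intro h
    rw [Complex.cpow_eq_zero_iff] at h
    exact hzne h.1
  have h2 : F z = (1-z)^(-s) := by
    rw [Complex.cpow_neg]
    exact eq_inv_of_mul_eq_one_left (by rw [mul_comm] at hconst; exact hconst)
  rw [← h2]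
  exact (summable_pow' hdom hz).hasSum

noncomputable def COEF (α β a c d : ℂ) (m : ℕ) : ℂ :=
  poch α m / poch β m * ∑ i ∈ range (m+1),
    poch a i * poch (β-d) i * poch d (m-i) / (poch c i * (i ! : ℂ) * ((m-i)! : ℂ))

section Main

variable {α β a c d : ℂ}

lemma dom_gL (hβ : ∀ k : ℕ, β ≠ -(k:ℂ)) (x : ℂ) :
    Dominated (fun m => poch α m / poch β m * x^m) ‖x‖ := by
  have h := (dominated_poch_div α β hβ).mul (dominated_pow x) zero_le_one (norm_nonneg x)
  rwa [one_mul] at h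

lemma dom_uL (hc : ∀ k : ℕ, c ≠ -(k:ℂ)) :
    Dominated (fun i => poch a i * poch (β-d) i / (poch c i * (i ! : ℂ))) 1 := by
  have h := (dominated_poch_div a c hc).mul
    (dominated_poch_div (β-d) 1 one_ne_negNat) zero_le_one zero_le_one
  rw [one_mul] at h
  apply h.of_norm_eq
  intro n
  rw [← poch_one n, div_mul_div_comm]

lemma dom_vL : Dominated (fun n => poch d n / (n ! : ℂ)) 1 := by
  apply (dominated_poch_div d 1 one_ne_negNat).of_norm_eq
  intro n
  rw [poch_one]

lemma lhs_fact (x : ℂ) (i n : ℕ) :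
    poch α (i + n) / poch β (i + n) * (poch a i * poch (β - d) i * poch d n) * x ^ (i + n) /
        (poch c i * (i ! : ℂ) * (n ! : ℂ))
      = (poch α (i+n) / poch β (i+n) * x^(i+n)) *
          (poch a i * poch (β-d) i / (poch c i * (i ! : ℂ))) * (poch d n / (n ! : ℂ)) := by
  ring

lemma lhs_summable_norm (hβ : ∀ k : ℕ, β ≠ -(k:ℂ)) (hc : ∀ k : ℕ, c ≠ -(k:ℂ))
    {x : ℂ} (hx : ‖x‖ < 1) :
    Summable (fun p : ℕ×ℕ =>
      ‖poch α (p.1 + p.2) / poch β (p.1 + p.2) * (poch a p.1 * poch (β - d) p.1 * poch d p.2)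
        * x ^ (p.1 + p.2) / (poch c p.1 * (p.1 ! : ℂ) * (p.2 ! : ℂ))‖) := by
  apply (summable_norm_W (norm_nonneg x) (dom_gL hβ x) (dom_uL hc) dom_vL hx).congr
  intro p
  rw [← lhs_fact x p.1 p.2]

lemma lhs_antidiag (hβ : ∀ k : ℕ, β ≠ -(k:ℂ)) (x : ℂ) (m : ℕ) :
    ∑ kl ∈ Finset.HasAntidiagonal.antidiagonal m,
      poch α (kl.1 + kl.2) / poch β (kl.1 + kl.2)
        * (poch a kl.1 * poch (β - d) kl.1 * poch d kl.2)
        * x ^ (kl.1 + kl.2) / (poch c kl.1 * (kl.1 ! : ℂ) * (kl.2 ! : ℂ))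
      = COEF α β a c d m * x^m := by
  rw [Finset.Nat.sum_antidiagonal_eq_sum_range_succ_mk, COEF, Finset.mul_sum, Finset.sum_mul]
  apply Finset.sum_congr rfl
  intro i hi
  have him : i ≤ m := by simpa [Nat.lt_succ_iff] using hi
  rw [show i + (m-i) = m from by omega]
  ring

lemma lhs_repr (hβ : ∀ k : ℕ, β ≠ -(k:ℂ)) (hc : ∀ k : ℕ, c ≠ -(k:ℂ))
    {x : ℂ} (hx : ‖x‖ < 1) :
    (∑' i : ℕ, ∑' n : ℕ,
        poch α (i + n) / poch β (i + n) * (poch a i * poch (β - d) i * poch d n) * x ^ (i + n) /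
          (poch c i * (i ! : ℂ) * (n ! : ℂ)))
      = ∑' m : ℕ, COEF α β a c d m * x^m := by
  rw [tsum_double_eq (lhs_summable_norm hβ hc hx)]
  exact tsum_congr fun m => lhs_antidiag hβ x m

lemma dom_COEF (hβ : ∀ k : ℕ, β ≠ -(k:ℂ)) (hc : ∀ k : ℕ, c ≠ -(k:ℂ)) :
    Dominated (COEF α β a c d) 1 := by
  intro r hr
  have hρ0 : (0:ℝ) < r⁻¹ := inv_pos.mpr (lt_trans one_pos hr)
  have hρ1 : r⁻¹ < 1 := inv_lt_one_of_one_lt₀ hr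
  have hxn : ‖((r⁻¹ : ℝ) : ℂ)‖ < 1 := by
    rw [Complex.norm_real, Real.norm_eq_abs, abs_of_pos hρ0]
    exact hρ1
  have hW := lhs_summable_norm (α := α) (a := a) (d := d) hβ hc hxn
  have hsum2 := summable_antidiagonal_norm hW
  have hsum3 : Summable (fun m => ‖COEF α β a c d m‖ * (r⁻¹)^m) := by
    refine Summable.of_nonneg_of_le (fun m => by positivity) (fun m => ?_) hsum2
    have h1 := lhs_antidiag (α := α) (a := a) (c := c) (d := d) hβ ((r⁻¹ : ℝ) : ℂ) m
    have h2 : ‖COEF α β a c d m * ((r⁻¹ : ℝ) : ℂ)^m‖ = ‖COEF α β a c d m‖ * (r⁻¹)^m := by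
      rw [norm_mul, norm_pow, Complex.norm_real, Real.norm_eq_abs, abs_of_pos hρ0]
    rw [← h2, ← h1]
    exact norm_sum_le _ _
  have htend := hsum3.tendsto_atTop_zero
  obtain ⟨C, hC⟩ := htend.bddAbove_range
  refine ⟨C + 1, ?_, fun m => ?_⟩
  · have h0 : ‖COEF α β a c d 0‖ * (r⁻¹)^0 ≤ C := hC (Set.mem_range_self 0)
    have : (0:ℝ) ≤ ‖COEF α β a c d 0‖ * (r⁻¹)^0 := by positivity
    linarith
  · have hm : ‖COEF α β a c d m‖ * (r⁻¹)^m ≤ C := hC (Set.mem_range_self m)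
    have hr0 : (0:ℝ) < r := lt_trans one_pos hr
    have hkey : ‖COEF α β a c d m‖ = (‖COEF α β a c d m‖ * (r⁻¹)^m) * r^m := by
      rw [mul_assoc, ← mul_pow, inv_mul_cancel₀ hr0.ne', one_pow, mul_one]
    rw [hkey]
    have : (0:ℝ) < r^m := by positivity
    nlinarith

end Main

noncomputable def WB (α β a c d x : ℂ) (p : ℕ×ℕ) : ℂ :=
  poch α (p.1+p.2) * x^(p.1+p.2) / (((p.1+p.2)!) : ℂ) * (((p.1+p.2).choose p.1 : ℕ) : ℂ) *
    ((-1:ℂ)^p.1 * poch (β-d) p.1 * poch (c-a) p.1 / (poch β p.1 * poch c p.1))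

noncomputable def ECOEF (α β a c d : ℂ) (n : ℕ) : ℂ :=
  poch α n * poch (β-d) n * poch (c-a) n / (poch β n * poch c n * (n ! : ℂ))

section Main2

variable {α β a c d : ℂ}

lemma dom_gR (x : ℂ) : Dominated (fun m => poch α m * x^m / (m ! : ℂ)) ‖x‖ := by
  have h := (dominated_poch_div α 1 one_ne_negNat).mul (dominated_pow x)
    zero_le_one (norm_nonneg x)
  rw [one_mul] at h
  apply h.of_norm_eq
  intro n
  rw [← poch_one n]
  exact congrArg norm (by ring)

lemma dom_uR (hβ : ∀ k : ℕ, β ≠ -(k:ℂ)) (hc : ∀ k : ℕ, c ≠ -(k:ℂ)) :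
    Dominated (fun n => (-1:ℂ)^n * poch (β-d) n * poch (c-a) n / (poch β n * poch c n)) 1 := by
  have h := (dominated_poch_div (β-d) β hβ).mul (dominated_poch_div (c-a) c hc)
    zero_le_one zero_le_one
  rw [one_mul] at h
  apply h.of_norm_eq
  intro n
  rw [norm_div, norm_mul, norm_mul, norm_pow, norm_neg, norm_one, one_pow, one_mul,
    norm_mul, norm_mul, norm_div, norm_div]
  ring

lemma dom_ECOEF (hβ : ∀ k : ℕ, β ≠ -(k:ℂ)) (hc : ∀ k : ℕ, c ≠ -(k:ℂ)) :
    Dominated (ECOEF α β a c d) 1 := by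
  have h := ((dominated_poch_div α β hβ).mul (dominated_poch_div (β-d) c hc)
    zero_le_one zero_le_one).mul (dominated_poch_div (c-a) 1 one_ne_negNat)
    (by norm_num) zero_le_one
  rw [one_mul, one_mul] at h
  apply h.of_norm_eq
  intro n
  rw [ECOEF, ← poch_one n]
  exact congrArg norm (by ring)

lemma rhs_summable_norm (hβ : ∀ k : ℕ, β ≠ -(k:ℂ)) (hc : ∀ k : ℕ, c ≠ -(k:ℂ))
    {x : ℂ} (hx2 : ‖x‖ < 1/2) :
    Summable (fun p : ℕ×ℕ => ‖WB α β a c d x p‖) := by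
  have hs := summable_norm_Wb (norm_nonneg x) (dom_gR (α := α) x)
    (dom_uR (β := β) (c := c) (a := a) (d := d) hβ hc)
    dominated_one (by linarith : 2*‖x‖ < 1)
  apply hs.congr
  intro p
  exact congrArg norm (by rw [WB, mul_one])

lemma rhs_term (hβ : ∀ k : ℕ, β ≠ -(k:ℂ)) (hc : ∀ k : ℕ, c ≠ -(k:ℂ))
    {x : ℂ} (hx : ‖x‖ < 1) (n : ℕ) :
    HasSum (fun k => WB α β a c d x (n,k))
      ((1-x)^(-α) * (poch α n * poch (β-d) n * poch (c-a) n * (x/(x-1))^n /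
        (poch β n * poch c n * (n ! : ℂ)))) := by
  have hne : (1-x) ≠ 0 := by
    intro h
    rw [sub_eq_zero] at h
    rw [← h] at hx
    simp at hx
  have hb := (binomial_hasSum (α+(n:ℂ)) hx).mul_left
    (poch α n * x^n * ((-1:ℂ)^n * poch (β-d) n * poch (c-a) n / (poch β n * poch c n)) /
      (n ! : ℂ))
  have hfun : ∀ k : ℕ,
      (poch α n * x^n * ((-1:ℂ)^n * poch (β-d) n * poch (c-a) n / (poch β n * poch c n)) /
        (n ! : ℂ)) * (poch (α+(n:ℂ)) k / (k ! : ℂ) * x^k)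
      = WB α β a c d x (n,k) := by
    intro k
    rw [WB]
    simp only
    rw [poch_add α n k, Nat.cast_choose ℂ (Nat.le_add_right n k), Nat.add_sub_cancel_left, pow_add]
    have h1 := fact_ne_zero' n
    have h2 := fact_ne_zero' k
    have h3 := fact_ne_zero' (n+k)
    field_simp
  have hsplit : (1-x)^(-(α+(n:ℂ))) = (1-x)^(-α) * ((1-x)^n)⁻¹ := by
    rw [show -(α+(n:ℂ)) = (-α) + (-(n:ℂ)) by ring, Complex.cpow_add _ _ hne]
    congr 1
    rw [Complex.cpow_neg, Complex.cpow_natCast]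
  have hwpow : (x/(x-1))^n = (-1:ℂ)^n * x^n * ((1-x)^n)⁻¹ := by
    rw [div_pow, show (x-1) = -(1-x) by ring, neg_pow, div_eq_mul_inv, mul_inv,
      show ((-1:ℂ)^n)⁻¹ = (-1:ℂ)^n by rw [← inv_pow, inv_neg, inv_one]]
    ring
  have hval : (poch α n * x^n * ((-1:ℂ)^n * poch (β-d) n * poch (c-a) n /
        (poch β n * poch c n)) / (n ! : ℂ)) * (1-x)^(-(α+(n:ℂ)))
      = (1-x)^(-α) * (poch α n * poch (β-d) n * poch (c-a) n * (x/(x-1))^n /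
        (poch β n * poch c n * (n ! : ℂ))) := by
    rw [hsplit, hwpow]
    ring
  rw [show (fun k => WB α β a c d x (n,k)) = (fun k =>
    (poch α n * x^n * ((-1:ℂ)^n * poch (β-d) n * poch (c-a) n / (poch β n * poch c n)) /
      (n ! : ℂ)) * (poch (α+(n:ℂ)) k / (k ! : ℂ) * x^k)) from funext fun k => (hfun k).symm,
    ← hval]
  exact hb

lemma rhs_antidiag (hβ : ∀ k : ℕ, β ≠ -(k:ℂ)) (hc : ∀ k : ℕ, c ≠ -(k:ℂ)) (x : ℂ) (m : ℕ) :
    ∑ kl ∈ Finset.HasAntidiagonal.antidiagonal m, WB α β a c d x kl = COEF α β a c d m * x^m := by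
  rw [Finset.Nat.sum_antidiagonal_eq_sum_range_succ_mk]
  have hterm : ∀ n ∈ range (m+1), WB α β a c d x (n, m-n)
      = (poch α m * poch (β-d) n * poch (c-a) n * (-1:ℂ)^n /
          (poch β n * poch c n * (n ! : ℂ) * ((m-n)! : ℂ))) * x^m := by
    intro n hn
    have hnm : n ≤ m := by simpa [Nat.lt_succ_iff] using hn
    rw [WB]
    simp only
    rw [show n + (m-n) = m from by omega, Nat.cast_choose ℂ hnm]
    have h1 := fact_ne_zero' n
    have h2 := fact_ne_zero' (m-n)
    have h3 := fact_ne_zero' m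
    field_simp
  rw [Finset.sum_congr rfl hterm, ← Finset.sum_mul, key α β a c d hβ hc m, COEF]

lemma rhs_repr (hβ : ∀ k : ℕ, β ≠ -(k:ℂ)) (hc : ∀ k : ℕ, c ≠ -(k:ℂ))
    {x : ℂ} (hx2 : ‖x‖ < 1/2) :
    (1-x)^(-α) * (∑' n : ℕ, poch α n * poch (β-d) n * poch (c-a) n * (x/(x-1))^n /
        (poch β n * poch c n * (n ! : ℂ)))
      = ∑' m : ℕ, COEF α β a c d m * x^m := by
  have hx1 : ‖x‖ < 1 := by linarith
  have hWb := rhs_summable_norm (α := α) (a := a) (d := d) hβ hc hx2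
  calc (1-x)^(-α) * (∑' n : ℕ, poch α n * poch (β-d) n * poch (c-a) n * (x/(x-1))^n /
        (poch β n * poch c n * (n ! : ℂ)))
      = ∑' n : ℕ, (1-x)^(-α) * (poch α n * poch (β-d) n * poch (c-a) n * (x/(x-1))^n /
          (poch β n * poch c n * (n ! : ℂ))) := tsum_mul_left.symm
    _ = ∑' n : ℕ, ∑' k : ℕ, WB α β a c d x (n,k) :=
        tsum_congr fun n => ((rhs_term hβ hc hx1 n).tsum_eq).symm
    _ = ∑' m : ℕ, ∑ kl ∈ Finset.HasAntidiagonal.antidiagonal m, WB α β a c d x kl := tsum_double_eq hWb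
    _ = ∑' m : ℕ, COEF α β a c d m * x^m := tsum_congr fun m => rhs_antidiag hβ hc x m

end Main2

lemma wmap_norm_lt {x : ℂ} (hre : x.re < 1/2) : ‖x/(x-1)‖ < 1 := by
  have hx1 : x ≠ 1 := by
    intro h
    rw [h] at hre
    norm_num [Complex.one_re] at hre
  have hsub : x - 1 ≠ 0 := sub_ne_zero.mpr hx1
  have h2 : ‖x‖^2 < ‖x-1‖^2 := by
    rw [Complex.sq_norm, Complex.sq_norm,
      Complex.normSq_apply, Complex.normSq_apply, Complex.sub_re, Complex.sub_im,
      Complex.one_re, Complex.one_im]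
    nlinarith [sq_nonneg x.im]
  have hlt : ‖x‖ < ‖x-1‖ := lt_of_pow_lt_pow_left₀ 2 (norm_nonneg _) h2
  rw [norm_div]
  exact (div_lt_one (lt_of_le_of_lt (norm_nonneg x) hlt)).mpr hlt

/-- **Cvijović–Miller reduction formula.** -/
theorem cvijovic_miller_reduction
    (α β a c d : ℂ)
    (hβ : ∀ k : ℕ, β ≠ -(k : ℂ)) (hc : ∀ k : ℕ, c ≠ -(k : ℂ)) :
    ∀ x : ℂ, ‖x‖ < 1 → x.re < 1 / 2 →
      (∑' i : ℕ, ∑' n : ℕ,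
        poch α (i + n) / poch β (i + n) *
          (poch a i * poch (β - d) i * poch d n) * x ^ (i + n) /
            (poch c i * (Nat.factorial i : ℂ) * (Nat.factorial n : ℂ)))
      = (1 - x) ^ (-α) *
          ∑' n : ℕ, poch α n * poch (β - d) n * poch (c - a) n *
            (x / (x - 1)) ^ n / (poch β n * poch c n * (Nat.factorial n : ℂ)) := by
  intro x hx hre
  have h1 := lhs_repr (α := α) (β := β) (a := a) (c := c) (d := d) hβ hc hx
  set Ω : Set ℂ := {z : ℂ | ‖z‖ < 1 ∧ z.re < 1/2} with hΩ
  have hΩeq : Ω = Metric.ball (0:ℂ) 1 ∩ {z : ℂ | z.re < 1/2} := by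
    ext z
    simp [hΩ, Metric.mem_ball, dist_zero_right]
  have hopen : IsOpen Ω := by
    rw [hΩeq]
    exact Metric.isOpen_ball.inter (isOpen_lt Complex.continuous_re continuous_const)
  have hconv : Convex ℝ Ω := by
    rw [hΩeq]
    exact (convex_ball _ _).inter (convex_halfSpace_re_lt _)
  set F : ℂ → ℂ := fun z => ∑' m, COEF α β a c d m * z^m with hFdef
  set G : ℂ → ℂ := fun z => (1-z)^(-α) * ∑' n, ECOEF α β a c d n * (z/(z-1))^n with hGdef
  have hFan : AnalyticOnNhd ℂ F (Metric.ball (0:ℂ) 1) := analyticOnNhd_powser (dom_COEF hβ hc)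
  have hbridge : ∀ z : ℂ, (∑' n, ECOEF α β a c d n * (z/(z-1))^n)
      = ∑' n : ℕ, poch α n * poch (β-d) n * poch (c-a) n * (z/(z-1))^n /
          (poch β n * poch c n * (n ! : ℂ)) :=
    fun z => tsum_congr fun n => by rw [ECOEF]; ring
  have hGdiff : DifferentiableOn ℂ G Ω := by
    intro z hz
    obtain ⟨hz1, hz2⟩ := hz
    have hzne1 : z ≠ 1 := by
      intro h
      rw [h] at hz2
      norm_num [Complex.one_re] at hz2
    have hw := wmap_norm_lt hz2
    have hd1 : DifferentiableAt ℂ (fun y : ℂ => (1-y)^(-α)) z := by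
      have hslit : (1-z) ∈ Complex.slitPlane := by
        left
        simp only [Complex.sub_re, Complex.one_re]
        linarith
      exact (((hasDerivAt_id z).const_sub 1).cpow_const hslit).differentiableAt
    have hd2 : DifferentiableAt ℂ (fun y : ℂ => ∑' n, ECOEF α β a c d n * (y/(y-1))^n) z := by
      have hinner : DifferentiableAt ℂ (fun w : ℂ => ∑' n, ECOEF α β a c d n * w^n)
          (z/(z-1)) := (hasDerivAt_powser (dom_ECOEF hβ hc) hw).differentiableAt
      have houter : DifferentiableAt ℂ (fun y : ℂ => y/(y-1)) z :=
        differentiableAt_id.div ((differentiableAt_id).sub_const 1) (sub_ne_zero.mpr hzne1)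
      have hcomp := DifferentiableAt.comp (𝕜 := ℂ)
        (g := fun w : ℂ => ∑' n, ECOEF α β a c d n * w^n)
        (f := fun y : ℂ => y/(y-1)) z hinner houter
      exact hcomp
    exact (hd1.mul hd2).differentiableWithinAt
  have hGan : AnalyticOnNhd ℂ G Ω := hGdiff.analyticOnNhd hopen
  have hsubset : Ω ⊆ Metric.ball (0:ℂ) 1 := by
    rw [hΩeq]
    exact Set.inter_subset_left
  have hev : F =ᶠ[nhds (0:ℂ)] G := by
    filter_upwards [Metric.ball_mem_nhds (0:ℂ) (by norm_num : (0:ℝ) < 1/2)] with z hzb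
    have hz2 : ‖z‖ < 1/2 := mem_ball_zero_iff.mp hzb
    show (∑' m, COEF α β a c d m * z^m) = (1-z)^(-α) * ∑' n, ECOEF α β a c d n * (z/(z-1))^n
    rw [hbridge z, rhs_repr hβ hc hz2]
  have hmem0 : (0:ℂ) ∈ Ω := by
    constructor
    · simp
    · norm_num [Complex.zero_re]
  have heqon : Set.EqOn F G Ω :=
    (hFan.mono hsubset).eqOn_of_preconnected_of_eventuallyEq hGan hconv.isPreconnected hmem0 hev
  have hxΩ : x ∈ Ω := ⟨hx, hre⟩
  have h2 : F x = G x := heqon hxΩ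
  rw [h1]
  calc (∑' m, COEF α β a c d m * x^m) = F x := rfl
    _ = G x := h2
    _ = (1 - x) ^ (-α) * ∑' n : ℕ, poch α n * poch (β - d) n * poch (c - a) n *
          (x / (x - 1)) ^ n / (poch β n * poch c n * (Nat.factorial n : ℂ)) := by
        rw [hGdef]
        simp only
        rw [hbridge x]
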